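/- arXiv:2201.01676 — 4 statements merged into one kernel-verified Lean document; each statement's English description precedes it below -/
import Mathlib

section
/- Li₂((3−√5)/2) = π²/15 − (log φ)², where φ = (√5+1)/2. -/
open Real Filter Set Topology

/-- The polylogarithm `Li_s(x) = ∑_{n ≥ 1} x^n / n^s` as a real series. -/
noncomputable def Li (s : ℕ) (x : ℝ) : ℝ := ∑' n : ℕ, x ^ (n + 1) / (n + 1 : ℝ) ^ s

lemma summable_aux : Summable (fun n : ℕ => 1 / ((n : ℝ) + 1) ^ 2) := by
  have h := Real.summable_one_div_nat_pow.2 (by norm_num : 1 < 2)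
  have := (summable_nat_add_iff 1).2 h
  simpa [Nat.cast_add] using this

lemma summable_li {x : ℝ} (h : |x| ≤ 1) :
    Summable (fun n : ℕ => x ^ (n + 1) / ((n : ℝ) + 1) ^ 2) := by
  refine Summable.of_norm (summable_aux.of_nonneg_of_le (fun n => norm_nonneg _) fun n => ?_)
  have hn : (0:ℝ) < ((n:ℝ)+1)^2 := by positivity
  rw [norm_div, norm_pow, norm_pow, Real.norm_eq_abs, Real.norm_eq_abs,
    abs_of_pos (by positivity : (0:ℝ) < (n:ℝ)+1)]
  gcongr
  exact pow_le_one₀ (abs_nonneg x) h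

lemma hasSum_li {x : ℝ} (h : |x| ≤ 1) :
    HasSum (fun n : ℕ => x ^ (n + 1) / ((n : ℝ) + 1) ^ 2) (Li 2 x) :=
  (summable_li h).hasSum

lemma continuousOn_li : ContinuousOn (Li 2) (Icc (-1 : ℝ) 1) := by
  refine continuousOn_tsum (fun i => ?_) summable_aux (fun n x hx => ?_)
  · exact ((continuous_pow _).div_const _).continuousOn
  · have hx1 : |x| ≤ 1 := abs_le.2 ⟨hx.1, hx.2⟩
    rw [norm_div, norm_pow, norm_pow, Real.norm_eq_abs, Real.norm_eq_abs,
      abs_of_pos (by positivity : (0:ℝ) < (n:ℝ)+1)]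
    gcongr
    exact pow_le_one₀ (abs_nonneg x) hx1

lemma li_zero : Li 2 0 = 0 := by
  simp [Li]

lemma li_one : Li 2 1 = π ^ 2 / 6 := by
  have h := hasSum_zeta_two
  have h1 : HasSum (fun n : ℕ => (1:ℝ) / ((n : ℝ) + 1) ^ 2) (π ^ 2 / 6) := by
    have h2 := (hasSum_nat_add_iff (f := fun n : ℕ => (1:ℝ) / (n : ℝ) ^ 2) 1).2
      (by simpa using h)
    simpa [Nat.cast_add] using h2
  have : HasSum (fun n : ℕ => (1:ℝ) ^ (n + 1) / ((n : ℝ) + 1) ^ 2) (π ^ 2 / 6) := by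
    simpa using h1
  exact this.tsum_eq

set_option maxHeartbeats 1000000 in
lemma hasDerivAt_li {x : ℝ} (h1 : |x| < 1) (h0 : x ≠ 0) :
    HasDerivAt (Li 2) (-Real.log (1 - x) / x) x := by
  obtain ⟨r, hr⟩ : ∃ r : ℝ, r = (1 + |x|) / 2 := ⟨_, rfl⟩
  have hr0 : 0 ≤ r := by rw [hr]; positivity
  have hr1 : r < 1 := by rw [hr]; linarith
  have hxr : |x| < r := by rw [hr]; linarith [abs_nonneg x]
  have key : HasDerivAt (fun z : ℝ => ∑' n : ℕ, z ^ (n + 1) / ((n : ℝ) + 1) ^ 2)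
      (∑' n : ℕ, x ^ n / ((n : ℝ) + 1)) x := by
    refine hasDerivAt_tsum_of_isPreconnected (𝕜 := ℝ) (F := ℝ) (u := fun n : ℕ => r ^ n)
      (g := fun (n : ℕ) (z : ℝ) => z ^ (n + 1) / ((n : ℝ) + 1) ^ 2)
      (g' := fun (n : ℕ) (y : ℝ) => y ^ n / ((n : ℝ) + 1))
      (t := Metric.ball (0:ℝ) r) (y₀ := x) (y := x)
      (summable_geometric_of_lt_one hr0 hr1) Metric.isOpen_ball
      ((convex_ball (0:ℝ) r).isPreconnected) (fun n y _ => ?_) (fun n y hy => ?_)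
      (by simpa [Real.dist_eq] using hxr) (summable_li h1.le)
      (by simpa [Real.dist_eq] using hxr)
    · have hp := (hasDerivAt_pow (n + 1) y).div_const (((n : ℝ) + 1) ^ 2)
      refine hp.congr_deriv ?_
      have hne : ((n : ℝ) + 1) ≠ 0 := by positivity
      push_cast
      field_simp
    · have hy' : |y| < r := by simpa [Real.dist_eq] using hy
      rw [norm_div, Real.norm_eq_abs, Real.norm_eq_abs, abs_pow,
        abs_of_pos (by positivity : (0:ℝ) < (n:ℝ)+1)]
      calc |y| ^ n / ((n:ℝ) + 1) ≤ |y| ^ n / 1 := by gcongr; linarith [Nat.cast_nonneg (α := ℝ) n]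
        _ = |y| ^ n := div_one _
        _ ≤ r ^ n := pow_le_pow_left₀ (abs_nonneg y) hy'.le n
  have hsum : ∑' n : ℕ, x ^ n / ((n : ℝ) + 1) = -Real.log (1 - x) / x := by
    have hlog := (hasSum_pow_div_log_of_abs_lt_one h1).div_const x
    have he : ∀ n : ℕ, x ^ (n + 1) / ((n : ℝ) + 1) / x = x ^ n / ((n : ℝ) + 1) := by
      intro n
      rw [pow_succ]
      field_simp
    have hfe : (fun n : ℕ => x ^ (n + 1) / ((n:ℝ)+1) / x) = fun n : ℕ => x ^ n / ((n:ℝ)+1) :=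
      funext he
    rw [hfe] at hlog
    exact hlog.tsum_eq
  have hrfl : Li 2 = fun z : ℝ => ∑' n : ℕ, z ^ (n + 1) / ((n : ℝ) + 1) ^ 2 := rfl
  rw [hrfl, ← hsum]
  exact key

lemma tendsto_li_comp {a : ℝ} (ha : a ∈ Icc (-1:ℝ) 1) {l : Filter ℝ} {g : ℝ → ℝ}
    (hg : Tendsto g l (𝓝 a)) (hmem : ∀ᶠ x in l, g x ∈ Icc (-1:ℝ) 1) :
    Tendsto (fun x => Li 2 (g x)) l (𝓝 (Li 2 a)) :=
  ((continuousOn_li.continuousWithinAt ha).tendsto).comp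
    (tendsto_nhdsWithin_iff.2 ⟨hg, hmem⟩)

lemma tendsto_log_mul_log : Tendsto (fun x : ℝ => Real.log x * Real.log (1 - x))
    (𝓝[>] (0:ℝ)) (𝓝 0) := by
  have h1 : Tendsto (fun x : ℝ => Real.log x * x) (𝓝[>] (0:ℝ)) (𝓝 0) := by
    have := tendsto_log_mul_rpow_nhdsGT_zero (one_pos)
    refine this.congr' ?_
    filter_upwards [self_mem_nhdsWithin] with x hx
    rw [Real.rpow_one]
  have hd : HasDerivAt (fun x : ℝ => Real.log (1 - x)) (-1) 0 := by
    have hc : HasDerivAt (fun x : ℝ => 1 - x) (-1) 0 :=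
      ((hasDerivAt_id (0:ℝ)).const_sub 1)
    have hl : HasDerivAt Real.log 1 ((fun x : ℝ => 1 - x) 0) := by
      norm_num
      simpa using Real.hasDerivAt_log one_ne_zero
    have := hl.comp (0:ℝ) hc
    exact this.congr_deriv (by norm_num)
  have h2 : Tendsto (fun x : ℝ => Real.log (1 - x) / x) (𝓝[>] (0:ℝ)) (𝓝 (-1)) := by
    rw [hasDerivAt_iff_tendsto_slope] at hd
    have hmono : 𝓝[>] (0:ℝ) ≤ 𝓝[≠] (0:ℝ) :=
      nhdsWithin_mono 0 (fun x hx => ne_of_gt hx)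
    refine (hd.mono_left hmono).congr' ?_
    filter_upwards [self_mem_nhdsWithin] with x hx
    simp [slope_def_field]
  have := h1.mul h2
  rw [zero_mul] at this
  refine this.congr' ?_
  filter_upwards [self_mem_nhdsWithin] with x hx
  have hx0 : x ≠ 0 := ne_of_gt hx
  field_simp

lemma li_reflection {x : ℝ} (hx : x ∈ Ioo (0:ℝ) 1) :
    Li 2 x + Li 2 (1 - x) + Real.log x * Real.log (1 - x) = π ^ 2 / 6 := by
  set F : ℝ → ℝ := fun z => Li 2 z + Li 2 (1 - z) + Real.log z * Real.log (1 - z) with hF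
  have hderiv : ∀ z ∈ Ioo (0:ℝ) 1, HasDerivAt F 0 z := by
    intro z hz
    have hz0 : z ≠ 0 := ne_of_gt hz.1
    have hz1 : (1:ℝ) - z ≠ 0 := by have := hz.2; intro h; linarith [sub_eq_zero.1 h]
    have hz1' : 0 < 1 - z := by linarith [hz.2]
    have habs : |z| < 1 := by rw [abs_of_pos hz.1]; exact hz.2
    have habs2 : |1 - z| < 1 := by rw [abs_of_pos hz1']; linarith [hz.1]
    have d1 : HasDerivAt (fun z => Li 2 z) (-Real.log (1 - z) / z) z := hasDerivAt_li habs hz0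
    have d2 : HasDerivAt (fun w : ℝ => Li 2 (1 - w))
        ((-Real.log (1 - (1 - z)) / (1 - z)) * (-1)) z := by
      exact (hasDerivAt_li habs2 hz1).comp z ((hasDerivAt_id z).const_sub 1)
    have d3 : HasDerivAt (fun w : ℝ => Real.log w * Real.log (1 - w))
        ((1 / z) * Real.log (1 - z) + Real.log z * ((1 / (1 - z)) * (-1))) z := by
      have dl1 : HasDerivAt Real.log (1 / z) z := by
        simpa [one_div] using Real.hasDerivAt_log hz0
      have dl2 : HasDerivAt (fun w : ℝ => Real.log (1 - w)) ((1 / (1 - z)) * (-1)) z := by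
        have h := (Real.hasDerivAt_log hz1).comp z ((hasDerivAt_id z).const_sub 1)
        exact h.congr_deriv (by rw [one_div])
      exact dl1.mul dl2
    have := (d1.add d2).add d3
    refine this.congr_deriv ?_
    rw [sub_sub_cancel]
    field_simp
    ring
  have hconst : ∀ z ∈ Ioo (0:ℝ) 1, z ≤ x → F z = F x := by
    intro z hz hzx
    have := constant_of_has_deriv_right_zero
      (f := F) (a := z) (b := x)
      (fun w hw => (hderiv w ⟨lt_of_lt_of_le hz.1 hw.1, lt_of_le_of_lt hw.2 hx.2⟩
        ).continuousAt.continuousWithinAt)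
      (fun w hw => (hderiv w ⟨lt_of_lt_of_le hz.1 hw.1, lt_of_lt_of_le hw.2 hx.2.le⟩
        ).hasDerivWithinAt)
    exact (this x ⟨hzx, le_rfl⟩).symm ▸ rfl
  have hev : ∀ᶠ z in 𝓝[>] (0:ℝ), F z = F x := by
    filter_upwards [Ioo_mem_nhdsGT_of_mem (left_mem_Ico.2 hx.1)] with z hz
    exact hconst z ⟨hz.1, lt_trans hz.2 hx.2⟩ hz.2.le
  have hmemIoo : Ioo (0:ℝ) 1 ∈ 𝓝[>] (0:ℝ) :=
    Ioo_mem_nhdsGT_of_mem (left_mem_Ico.2 one_pos)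
  have t1 : Tendsto (fun z : ℝ => Li 2 z) (𝓝[>] (0:ℝ)) (𝓝 (Li 2 0)) := by
    refine tendsto_li_comp (by norm_num) (tendsto_id.mono_left nhdsWithin_le_nhds) ?_
    filter_upwards [hmemIoo] with z hz
    exact ⟨by linarith [hz.1], hz.2.le⟩
  have t2 : Tendsto (fun z : ℝ => Li 2 (1 - z)) (𝓝[>] (0:ℝ)) (𝓝 (Li 2 1)) := by
    refine tendsto_li_comp (by norm_num) ?_ ?_
    · have : Tendsto (fun z : ℝ => 1 - z) (𝓝 (0:ℝ)) (𝓝 (1 - 0)) :=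
        (continuous_const.sub continuous_id).tendsto 0
      simpa using this.mono_left nhdsWithin_le_nhds
    · filter_upwards [hmemIoo] with z hz
      exact ⟨by linarith [hz.2], by linarith [hz.1]⟩
  have hlim : Tendsto F (𝓝[>] (0:ℝ)) (𝓝 (π ^ 2 / 6)) := by
    have := (t1.add t2).add tendsto_log_mul_log
    rw [li_zero, li_one] at this
    simpa using this
  have hlim2 : Tendsto F (𝓝[>] (0:ℝ)) (𝓝 (F x)) :=
    tendsto_const_nhds.congr' (by filter_upwards [hev] with z hz; exact hz.symm)
  exact (tendsto_nhds_unique hlim2 hlim)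

lemma li_landen {x : ℝ} (hx : x ∈ Ioo (0:ℝ) (1/2)) :
    Li 2 x + Li 2 (-(x / (1 - x))) + (Real.log (1 - x)) ^ 2 / 2 = 0 := by
  set F : ℝ → ℝ := fun z => Li 2 z + Li 2 (-(z / (1 - z))) + (Real.log (1 - z)) ^ 2 / 2 with hF
  have hderiv : ∀ z ∈ Ioo (0:ℝ) (1/2), HasDerivAt F 0 z := by
    intro z hz
    have hz0 : z ≠ 0 := ne_of_gt hz.1
    have hz1' : 0 < 1 - z := by linarith [hz.2]
    have hz1 : (1:ℝ) - z ≠ 0 := ne_of_gt hz1'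
    have habs : |z| < 1 := by rw [abs_of_pos hz.1]; linarith [hz.2]
    have huneg : -(z / (1 - z)) < 0 := by
      have : 0 < z / (1 - z) := div_pos hz.1 hz1'
      linarith
    have hu0 : -(z / (1 - z)) ≠ 0 := ne_of_lt huneg
    have huabs : |(-(z / (1 - z)))| < 1 := by
      rw [abs_neg, abs_of_pos (div_pos hz.1 hz1')]
      rw [div_lt_one hz1']
      linarith [hz.2]
    have d1 : HasDerivAt (fun z => Li 2 z) (-Real.log (1 - z) / z) z := hasDerivAt_li habs hz0
    have inner : HasDerivAt (fun w : ℝ => -(w / (1 - w)))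
        (-((1 * (1 - z) - z * (-1)) / (1 - z) ^ 2)) z := by
      exact (HasDerivAt.div (hasDerivAt_id z) ((hasDerivAt_id z).const_sub 1) hz1).neg
    have d2 : HasDerivAt (fun w : ℝ => Li 2 (-(w / (1 - w))))
        ((-Real.log (1 - -(z / (1 - z))) / -(z / (1 - z))) *
          (-((1 * (1 - z) - z * (-1)) / (1 - z) ^ 2))) z :=
      by exact (hasDerivAt_li huabs hu0).comp z inner
    have dl2 : HasDerivAt (fun w : ℝ => Real.log (1 - w)) ((1 / (1 - z)) * (-1)) z := by
      have h := (Real.hasDerivAt_log hz1).comp z ((hasDerivAt_id z).const_sub 1)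
      exact h.congr_deriv (by rw [one_div])
    have d3 : HasDerivAt (fun w : ℝ => (Real.log (1 - w)) ^ 2 / 2)
        ((2 * (Real.log (1 - z)) ^ 1 * ((1 / (1 - z)) * (-1))) / 2) z :=
      (dl2.pow 2).div_const 2
    have htot := (d1.add d2).add d3
    refine htot.congr_deriv ?_
    have hu1 : 1 - -(z / (1 - z)) = (1 - z)⁻¹ := by field_simp; ring
    rw [hu1, Real.log_inv]
    field_simp
    ring
  have hconst : ∀ z ∈ Ioo (0:ℝ) (1/2), z ≤ x → F z = F x := by
    intro z hz hzx
    have := constant_of_has_deriv_right_zero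
      (f := F) (a := z) (b := x)
      (fun w hw => (hderiv w ⟨lt_of_lt_of_le hz.1 hw.1, lt_of_le_of_lt hw.2 hx.2⟩
        ).continuousAt.continuousWithinAt)
      (fun w hw => (hderiv w ⟨lt_of_lt_of_le hz.1 hw.1, lt_of_lt_of_le hw.2 hx.2.le⟩
        ).hasDerivWithinAt)
    exact (this x ⟨hzx, le_rfl⟩).symm ▸ rfl
  have hev : ∀ᶠ z in 𝓝[>] (0:ℝ), F z = F x := by
    filter_upwards [Ioo_mem_nhdsGT_of_mem (left_mem_Ico.2 hx.1)] with z hz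
    exact hconst z ⟨hz.1, lt_trans hz.2 hx.2⟩ hz.2.le
  have hmemIoo : Ioo (0:ℝ) (1/2) ∈ 𝓝[>] (0:ℝ) :=
    Ioo_mem_nhdsGT_of_mem (left_mem_Ico.2 (by norm_num))
  have t1 : Tendsto (fun z : ℝ => Li 2 z) (𝓝[>] (0:ℝ)) (𝓝 (Li 2 0)) := by
    refine tendsto_li_comp (by norm_num) (tendsto_id.mono_left nhdsWithin_le_nhds) ?_
    filter_upwards [hmemIoo] with z hz
    exact ⟨by linarith [hz.1], by linarith [hz.2]⟩
  have t2 : Tendsto (fun z : ℝ => Li 2 (-(z / (1 - z)))) (𝓝[>] (0:ℝ)) (𝓝 (Li 2 0)) := by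
    refine tendsto_li_comp (by norm_num) ?_ ?_
    · have hc : ContinuousAt (fun z : ℝ => -(z / (1 - z))) 0 := by
        exact (continuousAt_id.div (continuousAt_const.sub continuousAt_id) (by norm_num)).neg
      have := hc.tendsto
      simpa using this.mono_left nhdsWithin_le_nhds
    · filter_upwards [hmemIoo] with z hz
      have hz1' : 0 < 1 - z := by linarith [hz.2]
      have h1 : 0 ≤ z / (1 - z) := div_nonneg hz.1.le hz1'.le
      have h2 : z / (1 - z) ≤ 1 := by
        rw [div_le_one hz1']; linarith [hz.2]
      exact ⟨by linarith, by linarith⟩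
  have t3 : Tendsto (fun z : ℝ => (Real.log (1 - z)) ^ 2 / 2) (𝓝[>] (0:ℝ)) (𝓝 0) := by
    have hc : ContinuousAt (fun z : ℝ => (Real.log (1 - z)) ^ 2 / 2) 0 := by
      have : ContinuousAt Real.log (1 - 0) := Real.continuousAt_log (by norm_num)
      exact (((this.comp (continuousAt_const.sub continuousAt_id)).pow 2).div_const 2)
    have := hc.tendsto
    simpa using this.mono_left nhdsWithin_le_nhds
  have hlim : Tendsto F (𝓝[>] (0:ℝ)) (𝓝 0) := by
    have := (t1.add t2).add t3
    rw [li_zero] at this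
    simpa using this
  have hlim2 : Tendsto F (𝓝[>] (0:ℝ)) (𝓝 (F x)) :=
    tendsto_const_nhds.congr' (by filter_upwards [hev] with z hz; exact hz.symm)
  exact tendsto_nhds_unique hlim2 hlim

lemma li_dup {y : ℝ} (h : |y| ≤ 1) : Li 2 y + Li 2 (-y) = Li 2 (y * y) / 2 := by
  have hny : |(-y)| ≤ 1 := by rwa [abs_neg]
  have hyy : |y * y| ≤ 1 := by
    rw [abs_mul]
    exact mul_le_one₀ h (abs_nonneg y) h
  have h1 := hasSum_li h
  have h2 := hasSum_li hny
  have hadd := h1.add h2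
  have h3 := (hasSum_li hyy).div_const 2
  set g : ℕ → ℝ := fun n => y ^ (n + 1) / ((n : ℝ) + 1) ^ 2 + (-y) ^ (n + 1) / ((n : ℝ) + 1) ^ 2
    with hg
  have hinj : Function.Injective (fun m : ℕ => 2 * m + 1) := by
    intro a b hab
    simp only [] at hab
    omega
  have hzero : ∀ n ∉ Set.range (fun m : ℕ => 2 * m + 1), g n = 0 := by
    intro n hn
    have heven : Even n := by
      rcases Nat.even_or_odd n with he | ho
      · exact he
      · obtain ⟨k, hk⟩ := ho
        exact absurd ⟨k, hk.symm⟩ hn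
    have hodd : Odd (n + 1) := heven.add_one
    simp [hg, hodd.neg_pow, neg_div]
  have hcomp : (g ∘ fun m : ℕ => 2 * m + 1)
      = fun m : ℕ => (y * y) ^ (m + 1) / ((m : ℝ) + 1) ^ 2 / 2 := by
    funext m
    have heven : Even (2 * m + 1 + 1) := ⟨m + 1, by ring⟩
    have hpow : (2 * m + 1 + 1) = 2 * (m + 1) := by ring
    have hm1 : ((m : ℝ) + 1) ≠ 0 := by positivity
    have hm2 : ((2 * m + 1 : ℕ) : ℝ) + 1 ≠ 0 := by positivity
    simp only [hg, Function.comp_apply, heven.neg_pow, hpow, pow_mul]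
    push_cast
    rw [show y ^ 2 = y * y from sq y]
    field_simp
    ring
  have h4 : HasSum g (Li 2 (y * y) / 2) := by
    rw [← hinj.hasSum_iff hzero, hcomp]
    exact h3
  exact hadd.unique h4

theorem stmt_2 :
    Li 2 ((3 - Real.sqrt 5) / 2)
      = Real.pi ^ 2 / 15 - (Real.log ((Real.sqrt 5 + 1) / 2)) ^ 2 := by
  have hs5 : Real.sqrt 5 ^ 2 = 5 := Real.sq_sqrt (by norm_num)
  have hsnn : 0 ≤ Real.sqrt 5 := Real.sqrt_nonneg 5
  have hs2 : 2 < Real.sqrt 5 := by nlinarith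
  have hs3 : Real.sqrt 5 < 3 := by nlinarith
  set y : ℝ := (Real.sqrt 5 - 1) / 2 with hy
  set x : ℝ := (3 - Real.sqrt 5) / 2 with hxdef
  have hy0 : 0 < y := by rw [hy]; linarith
  have hy1 : y < 1 := by rw [hy]; linarith
  have hyx : x = y * y := by rw [hxdef, hy]; linear_combination -hs5 / 4
  have h1x : 1 - x = y := by rw [hxdef, hy]; ring
  have hxm : x ∈ Ioo (0:ℝ) (1/2) := by
    constructor <;> rw [hxdef] <;> linarith
  have hxm1 : x ∈ Ioo (0:ℝ) 1 := by
    constructor <;> rw [hxdef] <;> linarith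
  have hxy2 : -(x / (1 - x)) = -y := by
    rw [h1x, hyx]
    field_simp
  have hym : |y| ≤ 1 := by rw [abs_of_pos hy0]; exact hy1.le
  have hrefl := li_reflection hxm1
  have land := li_landen hxm
  have dup := li_dup hym
  rw [hxy2, h1x] at land
  rw [h1x] at hrefl
  rw [← hyx] at dup
  have lx : Real.log x = Real.log y + Real.log y := by
    rw [hyx]; exact Real.log_mul hy0.ne' hy0.ne'
  have hphi : Real.log ((Real.sqrt 5 + 1) / 2) = -Real.log y := by
    have hmul : (Real.sqrt 5 + 1) / 2 * y = 1 := by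
      rw [hy]; linear_combination hs5 / 4
    have : (Real.sqrt 5 + 1) / 2 = y⁻¹ := eq_inv_of_mul_eq_one_left (by linarith [hmul])
    rw [this, Real.log_inv]
  rw [lx] at hrefl
  set t : ℝ := (Real.log y) ^ 2 with ht
  have h2t : (Real.log y + Real.log y) * Real.log y = 2 * t := by rw [ht]; ring
  rw [h2t] at hrefl
  rw [hphi]
  have hsq : (-Real.log y) ^ 2 = t := by rw [ht]; ring
  rw [hsq]
  linarith
end

section
/- Ramanujan's dilogarithm identity: Li₂(1/3) − (1/6)·Li₂(1/9) = π²/18 − (log 3)²/6. -/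
open Real Set Filter Topology

set_option maxHeartbeats 1000000

namespace RamanujanAux

lemma summable_aux : Summable (fun n : ℕ => (1:ℝ)/((n:ℝ)+1)^2) := by
  have := (summable_nat_add_iff 1).mpr (Real.summable_one_div_nat_pow.mpr one_lt_two)
  convert (config := {transparency := .default}) this using 2 with n
  push_cast
  ring

lemma Li2_summable {x : ℝ} (hx : |x| ≤ 1) :
    Summable (fun n : ℕ => x^(n+1)/((n:ℝ)+1)^2) := by
  refine summable_aux.of_norm_bounded (fun n => ?_)
  rw [norm_div, norm_pow]
  have h1 : ‖x‖ ^ (n+1) ≤ 1 := pow_le_one₀ (norm_nonneg x) (by simpa using hx)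
  have h2 : ‖((n:ℝ)+1)^2‖ = ((n:ℝ)+1)^2 := by
    rw [Real.norm_eq_abs, abs_of_pos]; positivity
  rw [h2]
  gcongr

lemma Li2_hasSum {x : ℝ} (hx : |x| ≤ 1) :
    HasSum (fun n : ℕ => x^(n+1)/((n:ℝ)+1)^2) (Li 2 x) :=
  (Li2_summable hx).hasSum

lemma Li2_zero : Li 2 0 = 0 := by
  unfold Li
  simp

lemma Li2_dup {x : ℝ} (hx : |x| ≤ 1) : Li 2 x + Li 2 (-x) = Li 2 (x^2) / 2 := by
  have hx2 : |x^2| ≤ 1 := by rw [abs_pow]; exact pow_le_one₀ (abs_nonneg x) hx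
  have h1 := (Li2_hasSum hx).add (Li2_hasSum (by rwa [abs_neg] : |(-x)| ≤ 1))
  set f : ℕ → ℝ := fun n : ℕ => x^(n+1)/((n:ℝ)+1)^2 + (-x)^(n+1)/((n:ℝ)+1)^2 with hf
  have heven : HasSum (fun k : ℕ => f (2*k)) 0 := by
    have he : (fun k : ℕ => f (2*k)) = fun _ => (0:ℝ) := by
      funext k
      have h : (-x)^(2*k+1) = -(x^(2*k+1)) := Odd.neg_pow ⟨k, by ring⟩ x
      simp only [hf]
      rw [h]
      ring
    rw [he]
    exact hasSum_zero
  have hodd : HasSum (fun k : ℕ => f (2*k+1)) (Li 2 (x^2) / 2) := by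
    have h2 := (Li2_hasSum hx2).div_const 2
    have he : (fun k : ℕ => f (2*k+1)) = fun k : ℕ => (x^2)^(k+1)/((k:ℝ)+1)^2/2 := by
      funext k
      have hp : (-x)^(2*k+1+1) = x^(2*k+1+1) := Even.neg_pow ⟨k+1, by ring⟩ x
      have hxx : (x^2)^(k+1) = x^(2*k+1+1) := by ring
      simp only [hf]
      rw [hp, hxx]
      have hc : ((2*k+1 : ℕ):ℝ) + 1 = 2*((k:ℝ)+1) := by push_cast; ring
      rw [hc]
      field_simp
      ring
    rw [he]
    exact h2
  have h3 := heven.even_add_odd hodd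
  rw [zero_add] at h3
  exact h1.unique h3

lemma Li2_one : Li 2 1 = π^2/6 := by
  have h : HasSum (fun n : ℕ => (1:ℝ)/(n:ℝ)^2) (π^2/6) := hasSum_zeta_two
  have h2 := ((hasSum_nat_add_iff' (f := fun n : ℕ => (1:ℝ)/(n:ℝ)^2) 1).mpr h)
  norm_num at h2
  have h3 : HasSum (fun n : ℕ => (1:ℝ)^(n+1)/((n:ℝ)+1)^2) (π^2/6) := by
    convert (config := {transparency := .default}) h2 using 2 with n
    simp
  exact ((Li2_hasSum (by norm_num)).unique h3)

noncomputable def D (x : ℝ) : ℝ := ∑' n : ℕ, x ^ n / ((n:ℝ) + 1)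

lemma hasDerivAt_Li2 {x : ℝ} (hx : |x| < 1) : HasDerivAt (Li 2) (D x) x := by
  set r : ℝ := (1 + |x|) / 2 with hr
  have hr1 : r < 1 := by rw [hr]; linarith
  have hr0 : 0 ≤ r := by positivity
  have hxr : x ∈ Set.Ioo (-r) r := by
    constructor <;> [nlinarith [neg_abs_le x]; nlinarith [le_abs_self x]]
  have hderiv : ∀ (n : ℕ) (y : ℝ), y ∈ Set.Ioo (-r) r →
      HasDerivAt (fun z : ℝ => z ^ (n+1) / ((n:ℝ)+1)^2) (y ^ n / ((n:ℝ)+1)) y := by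
    intro n y _
    have h := (hasDerivAt_pow (n+1) y).div_const (((n:ℝ)+1)^2)
    convert h using 1
    · rfl
    · rfl
    have : ((n:ℝ)+1) ≠ 0 := by positivity
    push_cast
    field_simp
  have hbound : ∀ (n : ℕ) (y : ℝ), y ∈ Set.Ioo (-r) r → ‖y ^ n / ((n:ℝ)+1)‖ ≤ r ^ n := by
    intro n y hy
    rw [norm_div, norm_pow, Real.norm_eq_abs, Real.norm_eq_abs]
    rw [abs_of_pos (by positivity : (0:ℝ) < (n:ℝ)+1)]
    have h1 : |y| ≤ r := by
      rw [abs_le]; exact ⟨hy.1.le, hy.2.le⟩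
    calc |y| ^ n / ((n:ℝ)+1) ≤ r ^ n / ((n:ℝ)+1) := by gcongr
      _ ≤ r ^ n := div_le_self (pow_nonneg hr0 n) (by simp)
  have h0 : Summable fun n : ℕ => (0:ℝ) ^ (n+1) / ((n:ℝ)+1)^2 := by
    simp only [pow_succ, mul_zero, zero_div]
    exact summable_zero
  have hmem0 : (0:ℝ) ∈ Set.Ioo (-r) r := by
    constructor <;> nlinarith [abs_nonneg x]
  exact hasDerivAt_tsum_of_isPreconnected (summable_geometric_of_lt_one hr0 hr1)
    isOpen_Ioo (convex_Ioo _ _).isPreconnected hderiv hbound hmem0 h0 hxr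

lemma D_zero : D 0 = 1 := by
  unfold D
  rw [tsum_eq_single 0]
  · norm_num
  · intro n hn
    rw [zero_pow hn, zero_div]

lemma D_eq {x : ℝ} (h : |x| < 1) (h0 : x ≠ 0) : D x = -Real.log (1-x) / x := by
  have hs := (hasSum_pow_div_log_of_abs_lt_one h).mul_left x⁻¹
  have he : (fun n : ℕ => x⁻¹ * (x^(n+1)/((n:ℝ)+1))) = fun n : ℕ => x^n/((n:ℝ)+1) := by
    funext n
    rw [pow_succ]
    field_simp
  rw [he] at hs
  unfold D
  rw [hs.tsum_eq]
  field_simp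

noncomputable def F (x : ℝ) : ℝ := Li 2 x + Li 2 (x/(x-1)) + (Real.log (1-x))^2/2

lemma maps_lem {x : ℝ} (hx : x ∈ Ioo (-1:ℝ) (1/2)) : x/(x-1) ∈ Ioo (-1:ℝ) (1/2) := by
  obtain ⟨h1, h2⟩ := hx
  have hd : x - 1 < 0 := by linarith
  constructor
  · rw [lt_div_iff_of_neg hd]; linarith
  · rw [div_lt_iff_of_neg hd]; linarith

lemma hasDerivAt_F {x : ℝ} (hx : x ∈ Ioo (-1:ℝ) (1/2)) : HasDerivAt F 0 x := by
  obtain ⟨ha, hb⟩ := hx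
  have hd : x - 1 < 0 := by linarith
  have hdne : x - 1 ≠ 0 := ne_of_lt hd
  have h1x : (1:ℝ) - x > 0 := by linarith
  set t := x/(x-1) with htdef
  have ht : t ∈ Ioo (-1:ℝ) (1/2) := maps_lem ⟨ha, hb⟩
  have htabs : |t| < 1 := by rw [abs_lt]; exact ⟨ht.1, by linarith [ht.2]⟩
  have hxabs : |x| < 1 := by rw [abs_lt]; exact ⟨ha, by linarith⟩
  have hLi1 : HasDerivAt (Li 2) (D x) x := hasDerivAt_Li2 hxabs
  have hinner : HasDerivAt (fun y : ℝ => y/(y-1)) (-1/(x-1)^2) x := by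
    have h := (hasDerivAt_id x).div ((hasDerivAt_id x).sub_const 1) hdne
    convert h using 1
    · rfl
    · rfl
    · rfl
    simp only [id]
    field_simp
    ring
  have hLi2 : HasDerivAt (fun y : ℝ => Li 2 (y/(y-1))) (D t * (-1/(x-1)^2)) x :=
    (hasDerivAt_Li2 htabs).comp (h₂ := Li 2) x hinner
  have hlog : HasDerivAt (fun y : ℝ => Real.log (1-y)) (-(1-x)⁻¹) x := by
    have hi : HasDerivAt (fun y : ℝ => 1 - y) (-1) x := (hasDerivAt_id x).const_sub 1
    have h := (Real.hasDerivAt_log (ne_of_gt h1x)).comp x hi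
    convert h using 1
    · rfl
    · rfl
    · rfl
    ring
  have hsq : HasDerivAt (fun y : ℝ => (Real.log (1-y))^2/2)
      (Real.log (1-x) * (-(1-x)⁻¹)) x := by
    have h := ((hlog.pow 2).div_const 2)
    convert h using 1
    · rfl
    · rfl
    · rfl
    ring
  have htot := (hLi1.add hLi2).add hsq
  have hzero : D x + D t * (-1/(x-1)^2) + Real.log (1-x) * (-(1-x)⁻¹) = 0 := by
    by_cases hx0 : x = 0
    · subst hx0
      simp [htdef, D_zero]
    · have ht0 : t ≠ 0 := by
        rw [htdef]
        exact div_ne_zero hx0 hdne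
      have h1t : 1 - t = (1-x)⁻¹ := by
        rw [htdef]
        field_simp
        ring
      rw [D_eq hxabs hx0, D_eq htabs ht0, h1t, Real.log_inv]
      rw [htdef]
      field_simp
      ring
  rw [hzero] at htot
  exact htot

lemma F_const : ∀ x ∈ Ioo (-1:ℝ) (1/2), F x = F 0 := by
  intro x hx
  have h0 : (0:ℝ) ∈ Ioo (-1:ℝ) (1/2) := by norm_num
  refine (convex_Ioo (-1:ℝ) (1/2)).is_const_of_fderivWithin_eq_zero
    (fun y hy => ((hasDerivAt_F hy).differentiableAt.differentiableWithinAt)) ?_ hx h0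
  intro y hy
  rw [fderivWithin_of_isOpen isOpen_Ioo hy]
  rw [(hasDerivAt_F hy).hasFDerivAt.fderiv]
  ext
  simp

lemma F_zero : F 0 = 0 := by
  unfold F
  norm_num [Li2_zero]

lemma landen {x : ℝ} (hx : x ∈ Ioo (-1:ℝ) (1/2)) :
    Li 2 x + Li 2 (x/(x-1)) = -(Real.log (1-x))^2/2 := by
  have h := F_const x hx
  rw [F_zero] at h
  unfold F at h
  linarith

lemma Li2_continuousOn : ContinuousOn (Li 2) (Icc (-1:ℝ) 1) := by
  have h := tendstoUniformlyOn_tsum (f := fun (n : ℕ) (x : ℝ) => x^(n+1)/((n:ℝ)+1)^2)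
    summable_aux (s := Icc (-1:ℝ) 1) ?_
  · have heq : Li 2 = fun x : ℝ => ∑' n : ℕ, x^(n+1)/((n:ℝ)+1)^2 := by
      funext x; unfold Li; norm_num
    rw [heq]
    refine h.continuousOn (Filter.Eventually.frequently ?_)
    filter_upwards with t
    exact continuousOn_finset_sum _ (fun n _ => (continuous_pow (n+1)).continuousOn.div_const _)
  · intro n x hx
    rw [norm_div, norm_pow, Real.norm_eq_abs, Real.norm_eq_abs,
      abs_of_pos (by positivity : (0:ℝ) < ((n:ℝ)+1)^2)]
    have h1 : |x| ≤ 1 := abs_le.mpr ⟨hx.1, hx.2⟩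
    gcongr
    · exact pow_le_one₀ (abs_nonneg x) h1

lemma landen_half : Li 2 (1/2) + Li 2 (-1) = -(Real.log 2)^2/2 := by
  set s : Set ℝ := Ioo (-1:ℝ) (1/2) with hs
  have hsub : s ⊆ Icc (-1:ℝ) 1 := fun y hy => ⟨hy.1.le, by linarith [hy.2]⟩
  have hne : (𝓝[s] (1/2 : ℝ)).NeBot := by
    apply mem_closure_iff_nhdsWithin_neBot.mp
    rw [hs, closure_Ioo (by norm_num : (-1:ℝ) ≠ 1/2)]
    exact ⟨by norm_num, le_refl _⟩
  have cw1 : ContinuousWithinAt (Li 2) s (1/2) :=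
    (Li2_continuousOn.continuousWithinAt (by norm_num : (1/2:ℝ) ∈ Icc (-1:ℝ) 1)).mono hsub
  have hptval : (1/2:ℝ)/((1/2:ℝ)-1) = -1 := by norm_num
  have cw2 : ContinuousWithinAt (fun x : ℝ => Li 2 (x/(x-1))) s (1/2) := by
    have hf : ContinuousWithinAt (fun x : ℝ => x/(x-1)) s (1/2) :=
      (continuousAt_id.div (continuousAt_id.sub continuousAt_const) (by norm_num)).continuousWithinAt
    have hg : ContinuousWithinAt (Li 2) (Icc (-1:ℝ) 1) ((1/2:ℝ)/((1/2:ℝ)-1)) := by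
      rw [hptval]
      exact Li2_continuousOn.continuousWithinAt (by norm_num)
    have hmaps : MapsTo (fun x : ℝ => x/(x-1)) s (Icc (-1:ℝ) 1) := by
      intro y hy
      have h := maps_lem hy
      exact ⟨h.1.le, by linarith [h.2]⟩
    exact ContinuousWithinAt.comp (g := Li 2) (f := fun x : ℝ => x/(x-1)) hg hf hmaps
  have cw3 : ContinuousWithinAt (fun x : ℝ => (Real.log (1-x))^2/2) s (1/2) := by
    apply ContinuousAt.continuousWithinAt
    have hlog : ContinuousAt (fun x : ℝ => Real.log (1-x)) (1/2) :=
      ContinuousAt.comp (Real.continuousAt_log (by norm_num)) (continuousAt_const.sub continuousAt_id)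
    exact (hlog.pow 2).div_const 2
  have hlim : Tendsto F (𝓝[s] (1/2:ℝ)) (𝓝 (F (1/2))) := (cw1.add cw2).add cw3
  have hev : ∀ᶠ x in 𝓝[s] (1/2:ℝ), F x = 0 := by
    filter_upwards [eventually_mem_nhdsWithin] with x hx
    have h := landen hx
    unfold F
    linarith
  have hlim0 : Tendsto F (𝓝[s] (1/2:ℝ)) (𝓝 0) :=
    Tendsto.congr' (EventuallyEq.symm hev) tendsto_const_nhds
  have hF : F (1/2) = 0 := tendsto_nhds_unique hlim hlim0
  unfold F at hF
  rw [hptval] at hF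
  have h12 : (1:ℝ) - 1/2 = 1/2 := by norm_num
  rw [h12] at hF
  have hl : Real.log (1/2) = -Real.log 2 := by
    rw [one_div, Real.log_inv]
  rw [hl] at hF
  nlinarith [hF]

end RamanujanAux

open RamanujanAux

theorem stmt_5 :
    Li 2 (1 / 3) - 1 / 6 * Li 2 (1 / 9)
      = Real.pi ^ 2 / 18 - (Real.log 3) ^ 2 / 6 := by
  have l2 : Real.log 2 ≠ 0 := by positivity
  -- Landen at 1/3
  have h1 : Li 2 (1/3) + Li 2 (-(1/2)) = -(Real.log 2 - Real.log 3)^2/2 := by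
    have h := landen (by norm_num : (1/3:ℝ) ∈ Ioo (-1:ℝ) (1/2))
    have e1 : (1/3:ℝ)/((1/3:ℝ)-1) = -(1/2) := by norm_num
    have e2 : (1:ℝ) - 1/3 = 2/3 := by norm_num
    rw [e1, e2] at h
    rw [h, Real.log_div (by norm_num) (by norm_num)]
  -- Landen at -1/3
  have h2 : Li 2 (-(1/3)) + Li 2 (1/4) = -(2*Real.log 2 - Real.log 3)^2/2 := by
    have h := landen (by norm_num : (-(1/3):ℝ) ∈ Ioo (-1:ℝ) (1/2))
    have e1 : (-(1/3):ℝ)/((-(1/3):ℝ)-1) = 1/4 := by norm_num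
    have e2 : (1:ℝ) - (-(1/3)) = 4/3 := by norm_num
    rw [e1, e2] at h
    rw [h, Real.log_div (by norm_num) (by norm_num)]
    have : Real.log 4 = 2 * Real.log 2 := by
      rw [show (4:ℝ) = 2^2 by norm_num, Real.log_pow]
      push_cast; ring
    rw [this]
  -- duplication at 1/2
  have h3 : Li 2 (1/2) + Li 2 (-(1/2)) = Li 2 (1/4) / 2 := by
    have h := Li2_dup (abs_le.mpr (by norm_num) : |(1/2:ℝ)| ≤ 1)
    have e : ((1/2:ℝ))^2 = 1/4 := by norm_num
    rwa [e] at h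
  -- Landen at 1/2 (by continuity) and Li2(-1)
  have h5 : Li 2 (-1) = -(π^2/12) := by
    have h := Li2_dup (abs_le.mpr (by norm_num) : |(1:ℝ)| ≤ 1)
    rw [one_pow, Li2_one] at h
    linarith
  have h4 : Li 2 (1/2) + Li 2 (-1) = -(Real.log 2)^2/2 := landen_half
  -- duplication at 1/3
  have h6 : Li 2 (1/9) = 2 * Li 2 (1/3) + 2 * Li 2 (-(1/3)) := by
    have h := Li2_dup (abs_le.mpr (by norm_num) : |(1/3:ℝ)| ≤ 1)
    have e : ((1/3:ℝ))^2 = 1/9 := by norm_num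
    rw [e] at h
    linarith
  linear_combination (2/3)*h1 - (1/3)*h2 - (2/3)*h3 + (2/3)*h4 - (2/3)*h5 - (1/6)*h6
end

section
/- Apéry's series: ∑_{n=1}^∞ (−1)^n / (n³ · binomial(2n, n)) = −(2/5)ζ(3). -/
/-- `ζ(3) = ∑_{n ≥ 1} 1/n³`. -/
noncomputable def zeta3 : ℝ := ∑' n : ℕ, 1 / (n + 1 : ℝ) ^ 3

open Finset Filter
open scoped Nat Topology

/-- `d n k = (k!)² (n-k-1)! / (k² (n+k)!)`. -/
noncomputable def dR (n k : ℕ) : ℝ :=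
  ((k ! : ℝ))^2 * ((n - k - 1)! : ℝ) / ((k : ℝ)^2 * ((n + k)! : ℝ))

/-- `ε(N, k+1) = ((k+1)!)² (N-k-1)! / (2 (k+1)³ (N+k+1)!)`. -/
noncomputable def epsR (N k : ℕ) : ℝ :=
  (((k+1)! : ℝ))^2 * ((N - (k+1))! : ℝ) / (2 * ((k:ℝ)+1)^3 * ((N + (k+1))! : ℝ))

noncomputable def ER (N : ℕ) : ℝ := ∑ k ∈ Finset.range N, (-1:ℝ)^k * epsR N k

noncomputable def apR (n : ℕ) : ℝ :=
  (-1 : ℝ) ^ (n + 1) / ((n + 1 : ℝ) ^ 3 * (Nat.choose (2 * (n + 1)) (n + 1)))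

lemma my_inner_sum (n : ℕ) (m : ℕ) (h : m + 1 ≤ n) :
    ∑ k ∈ Finset.range m, (-1 : ℝ)^k * dR n (k+1)
      = 1/(n : ℝ)^3 + (-1)^(m+1) * ((m ! : ℝ))^2 * ((n - m - 1)! : ℝ) / ((n:ℝ)^2 * ((n+m)! : ℝ)) := by
  induction m with
  | zero =>
    obtain ⟨c, rfl⟩ : ∃ c, n = c + 1 := ⟨n - 1, by omega⟩
    have h1 : c + 1 - 0 - 1 = c := by omega
    have h2 : (c + 1 + 0)! = (c+1) * c ! := by
      simp [Nat.factorial_succ]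
    rw [Finset.sum_range_zero, h1, h2]
    have hc : (0:ℝ) < ((c ! : ℝ)) := by exact_mod_cast Nat.factorial_pos c
    have hn : (0:ℝ) < (c:ℝ) + 1 := by positivity
    push_cast
    field_simp
    ring
  | succ m ih =>
    rw [Finset.sum_range_succ, ih (by omega)]
    obtain ⟨c, rfl⟩ : ∃ c, n = m + 2 + c := ⟨n - m - 2, by omega⟩
    have e1 : m + 2 + c - m - 1 = c + 1 := by omega
    have e2 : m + 2 + c - (m+1) - 1 = c := by omega
    have e4 : m + 2 + c + (m + 1) = (m + 2 + c + m) + 1 := by omega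
    unfold dR
    rw [e1, e2, e4]
    have hf1 : ((c+1)! : ℝ) = (c+1) * (c ! : ℝ) := by
      push_cast [Nat.factorial_succ]; ring
    have hf2 : (((m+2+c+m) + 1)! : ℝ) = (m+2+c+m+1) * (((m+2+c+m))! : ℝ) := by
      push_cast [Nat.factorial_succ]; ring
    have hf3 : (((m+1))! : ℝ) = (m+1) * ((m)! : ℝ) := by
      push_cast [Nat.factorial_succ]; ring
    rw [hf1, hf2, hf3]
    have p1 : (0:ℝ) < ((m)! : ℝ) := by exact_mod_cast Nat.factorial_pos m
    have p2 : (0:ℝ) < ((c)! : ℝ) := by exact_mod_cast Nat.factorial_pos c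
    have p3 : (0:ℝ) < (((m+2+c+m))! : ℝ) := by exact_mod_cast Nat.factorial_pos _
    have p4 : (0:ℝ) < ((m:ℝ)+2+(c:ℝ)) := by positivity
    push_cast
    field_simp
    ring

lemma my_eps_diff (N k : ℕ) (h : k + 1 ≤ N) :
    epsR (N+1) k - epsR N k = - dR (N+1) (k+1) := by
  obtain ⟨c, rfl⟩ : ∃ c, N = k + 1 + c := ⟨N - k - 1, by omega⟩
  unfold epsR dR
  have e1 : k + 1 + c + 1 - (k+1) = c + 1 := by omega
  have e2 : k + 1 + c - (k+1) = c := by omega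
  have e3 : c + 1 - 1 = c := by omega
  have e4 : k + 1 + c + 1 + (k + 1) = (k+1+c+(k+1)) + 1 := by omega
  rw [e1, e2, e3, e4]
  have hf1 : ((c+1)! : ℝ) = (c+1) * (c ! : ℝ) := by push_cast [Nat.factorial_succ]; ring
  have hf2 : (((k+1+c+(k+1)) + 1)! : ℝ) = (k+1+c+(k+1)+1) * ((k+1+c+(k+1))! : ℝ) := by
    push_cast [Nat.factorial_succ]; ring
  rw [hf1, hf2]
  have p2 : (0:ℝ) < ((c)! : ℝ) := by exact_mod_cast Nat.factorial_pos c
  have p3 : (0:ℝ) < (((k+1+c+(k+1)))! : ℝ) := by exact_mod_cast Nat.factorial_pos _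
  have p5 : (0:ℝ) < (((k+1))! : ℝ) := by exact_mod_cast Nat.factorial_pos _
  push_cast
  field_simp
  ring

lemma my_finite_id (N : ℕ) :
    ∑ n ∈ Finset.range N, (1:ℝ)/((n:ℝ)+1)^3
      = -(5/2) * ∑ n ∈ Finset.range N, apR n - ER N := by
  induction N with
  | zero => simp [ER]
  | succ N ih =>
    have hE : ER (N+1) = ER N
        - (1/((N:ℝ)+1)^3 + (-1)^(N+1) * ((N ! : ℝ))^2 * ((N + 1 - N - 1)! : ℝ)
            / (((N:ℝ)+1)^2 * (((N+1+N))! : ℝ)))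
        + (-1:ℝ)^N * epsR (N+1) N := by
      unfold ER
      rw [Finset.sum_range_succ]
      have h1 : ∑ k ∈ Finset.range N, (-1:ℝ)^k * epsR (N+1) k
          = ∑ k ∈ Finset.range N, (-1:ℝ)^k * epsR N k
            + ∑ k ∈ Finset.range N, (-1:ℝ)^k * (- dR (N+1) (k+1)) := by
        rw [← Finset.sum_add_distrib]
        apply Finset.sum_congr rfl
        intro k hk
        rw [← my_eps_diff N k (by simpa using Finset.mem_range.mp hk)]
        ring
      rw [h1]
      have h2 : ∑ k ∈ Finset.range N, (-1:ℝ)^k * (- dR (N+1) (k+1))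
          = - ∑ k ∈ Finset.range N, (-1:ℝ)^k * dR (N+1) (k+1) := by
        rw [← Finset.sum_neg_distrib]
        apply Finset.sum_congr rfl; intro k _; ring
      rw [h2, my_inner_sum (N+1) N (by omega)]
      push_cast
      ring
    rw [Finset.sum_range_succ, Finset.sum_range_succ, ih, hE]
    have e0 : N + 1 - N - 1 = 0 := by omega
    rw [e0]
    have echoose : ((2*(N+1)).choose (N+1) : ℝ) * (((N+1)! : ℝ))^2 = ((2*(N+1))! : ℝ) := by
      have := Nat.choose_mul_factorial_mul_factorial (show N+1 ≤ 2*(N+1) by omega)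
      have e1 : 2*(N+1) - (N+1) = N+1 := by omega
      rw [e1] at this
      exact_mod_cast by rw [← this]; push_cast; ring
    have hcpos : (0:ℝ) < ((2*(N+1)).choose (N+1) : ℝ) := by
      exact_mod_cast Nat.choose_pos (show N+1 ≤ 2*(N+1) by omega)
    unfold apR epsR
    have e2 : N + 1 - (N+1) = 0 := by omega
    have e3 : N + 1 + (N + 1) = (N+1+N) + 1 := by omega
    have e4 : 2 * (N+1) = (N+1+N)+1 := by omega
    rw [e2, e3]
    have hf2 : (((N+1+N) + 1)! : ℝ) = ((N:ℝ)+1+(N:ℝ)+1) * (((N+1+N))! : ℝ) := by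
      push_cast [Nat.factorial_succ]; ring
    have hf3 : (((N+1))! : ℝ) = ((N:ℝ)+1) * ((N)! : ℝ) := by
      push_cast [Nat.factorial_succ]; ring
    rw [e4] at echoose hcpos ⊢
    rw [hf2, hf3] at echoose ⊢
    have p1 : (0:ℝ) < ((N)! : ℝ) := by exact_mod_cast Nat.factorial_pos N
    have p3 : (0:ℝ) < (((N+1+N))! : ℝ) := by exact_mod_cast Nat.factorial_pos _
    have p4 : (0:ℝ) < (N:ℝ)+1 := by positivity
    rw [Nat.factorial_zero]
    have hC : ((((N+1+N)+1).choose (N+1)) : ℝ)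
        = ((N:ℝ)+1+(N:ℝ)+1) * (((N+1+N))! : ℝ) / ((((N:ℝ)+1) * ((N)! : ℝ))^2) := by
      field_simp at echoose ⊢
      linarith [echoose]
    rw [hC]
    push_cast
    field_simp
    ring

lemma my_fact_aux (N : ℕ) : ∀ j, 1 ≤ j → (N+1) * j ! * N ! ≤ (N+j)! := by
  intro j
  induction j with
  | zero => omega
  | succ j ih =>
    intro _
    rcases Nat.eq_zero_or_pos j with hj | hj
    · subst hj; simp [Nat.factorial_succ]
    · calc (N+1) * (j+1)! * N ! = (j+1) * ((N+1) * j ! * N !) := by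
            rw [Nat.factorial_succ]; ring
        _ ≤ (j+1) * (N+j)! := Nat.mul_le_mul_left _ (ih hj)
        _ ≤ (N+j+1) * (N+j)! := Nat.mul_le_mul_right _ (by omega)
        _ = (N+(j+1))! := by rw [← Nat.factorial_succ]; ring_nf

lemma my_fact_ineq (N j : ℕ) (h1 : 1 ≤ j) (h2 : j ≤ N) :
    j ! * j ! * ((N+1) * (N - j)!) ≤ (N+j)! := by
  have hA : j ! * (N-j)! ≤ N ! := by
    have h := Nat.choose_mul_factorial_mul_factorial h2
    calc j ! * (N-j)! = 1 * (j ! * (N-j)!) := (one_mul _).symm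
      _ ≤ N.choose j * (j ! * (N-j)!) :=
          Nat.mul_le_mul_right _ (Nat.choose_pos h2)
      _ = N ! := by rw [← h]; ring
  calc j ! * j ! * ((N+1) * (N - j)!) = (N+1) * j ! * (j ! * (N-j)!) := by ring
    _ ≤ (N+1) * j ! * N ! := Nat.mul_le_mul_left _ hA
    _ ≤ (N+j)! := my_fact_aux N j h1

lemma my_eps_bound (N k : ℕ) (h : k + 1 ≤ N) :
    epsR N k ≤ 1 / (2 * ((k:ℝ)+1)^3 * ((N:ℝ)+1)) := by
  unfold epsR
  rw [div_le_div_iff₀ (by positivity) (by positivity)]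
  have := my_fact_ineq N (k+1) (by omega) h
  have hcast : (((k+1)! : ℝ))^2 * ((N - (k+1))! : ℝ) * ((N:ℝ)+1) ≤ ((N + (k+1))! : ℝ) := by
    have h2 : (k+1)! ^ 2 * (N - (k+1))! * (N + 1) ≤ (N+(k+1))! := by
      calc (k+1)! ^ 2 * (N - (k+1))! * (N+1)
          = (k+1)! * (k+1)! * ((N+1) * (N - (k+1))!) := by ring
        _ ≤ (N+(k+1))! := this
    exact_mod_cast h2
  nlinarith [(by positivity : (0:ℝ) < 2 * ((k:ℝ)+1)^3)]

lemma my_sg : Summable (fun n : ℕ => 1/((n:ℝ)+1)^3) := by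
  have h : Summable (fun n : ℕ => 1/((n:ℝ))^3) :=
    Real.summable_one_div_nat_pow.mpr (by norm_num)
  have h2 := (summable_nat_add_iff (f := fun n : ℕ => 1/((n:ℝ))^3) 1).mpr h
  simpa using h2

lemma my_ER_bound (N : ℕ) :
    ‖ER N‖ ≤ (∑' k : ℕ, (1/2) * (1/((k:ℝ)+1)^3)) * (1/((N:ℝ)+1)) := by
  have hsum : Summable (fun k : ℕ => (1/2 : ℝ) * (1/((k:ℝ)+1)^3)) := my_sg.mul_left _
  calc ‖ER N‖ ≤ ∑ k ∈ Finset.range N, ‖(-1:ℝ)^k * epsR N k‖ := norm_sum_le _ _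
    _ ≤ ∑ k ∈ Finset.range N, ((1/2) * (1/((k:ℝ)+1)^3)) * (1/((N:ℝ)+1)) := by
        apply Finset.sum_le_sum
        intro k hk
        have hkN : k + 1 ≤ N := Finset.mem_range.mp hk
        have h0 : (0:ℝ) ≤ epsR N k := by unfold epsR; positivity
        have : ‖(-1:ℝ)^k * epsR N k‖ = epsR N k := by
          rw [norm_mul, norm_pow, norm_neg, norm_one, one_pow, one_mul,
            Real.norm_of_nonneg h0]
        rw [this]
        calc epsR N k ≤ 1 / (2 * ((k:ℝ)+1)^3 * ((N:ℝ)+1)) := my_eps_bound N k hkN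
          _ = ((1/2) * (1/((k:ℝ)+1)^3)) * (1/((N:ℝ)+1)) := by
              rw [div_eq_iff (by positivity)]; field_simp
    _ = (∑ k ∈ Finset.range N, (1/2) * (1/((k:ℝ)+1)^3)) * (1/((N:ℝ)+1)) := by
        rw [Finset.sum_mul]
    _ ≤ (∑' k : ℕ, (1/2) * (1/((k:ℝ)+1)^3)) * (1/((N:ℝ)+1)) := by
        apply mul_le_mul_of_nonneg_right _ (by positivity)
        exact Summable.sum_le_tsum _ (fun k _ => by positivity) hsum

lemma my_ER_tendsto : Tendsto ER atTop (𝓝 0) := by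
  apply squeeze_zero_norm my_ER_bound
  have h := tendsto_one_div_add_atTop_nhds_zero_nat (𝕜 := ℝ)
  have := h.const_mul (∑' k : ℕ, (1/2) * (1/((k:ℝ)+1)^3))
  simpa using this

lemma my_summable_apR : Summable apR := by
  apply Summable.of_abs
  apply Summable.of_nonneg_of_le (fun n => abs_nonneg _) _ my_sg
  intro n
  unfold apR
  have hC : (1:ℝ) ≤ ((2*(n+1)).choose (n+1) : ℝ) := by
    exact_mod_cast Nat.choose_pos (show n+1 ≤ 2*(n+1) by omega)
  have hd : (0:ℝ) < ((n:ℝ)+1)^3 * ((2*(n+1)).choose (n+1) : ℝ) := by positivity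
  rw [abs_div, abs_pow, abs_neg, abs_one, one_pow, abs_of_pos hd]
  rw [div_le_div_iff₀ hd (by positivity)]
  nlinarith [(by positivity : (0:ℝ) < ((n:ℝ)+1)^3)]

theorem stmt_15 :
    ∑' n : ℕ, (-1 : ℝ) ^ (n + 1) / ((n + 1 : ℝ) ^ 3 * (Nat.choose (2 * (n + 1)) (n + 1)))
      = -(2 / 5) * zeta3 := by
  have hap : Tendsto (fun N => ∑ n ∈ Finset.range N, apR n) atTop (𝓝 (∑' n, apR n)) :=
    my_summable_apR.hasSum.tendsto_sum_nat
  have hT : Tendsto (fun N => ∑ n ∈ Finset.range N, (1:ℝ)/((n:ℝ)+1)^3) atTop (𝓝 zeta3) := by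
    have := my_sg.hasSum.tendsto_sum_nat
    simpa [zeta3] using this
  have key : ∀ N, ∑ n ∈ Finset.range N, apR n
      = (-2/5) * ((∑ n ∈ Finset.range N, (1:ℝ)/((n:ℝ)+1)^3) + ER N) := by
    intro N
    have := my_finite_id N
    linarith
  have h2 : Tendsto (fun N => ∑ n ∈ Finset.range N, apR n) atTop (𝓝 (-(2/5)*zeta3)) := by
    have h3 : Tendsto (fun N => (-2/5 : ℝ) * ((∑ n ∈ Finset.range N, (1:ℝ)/((n:ℝ)+1)^3) + ER N))
        atTop (𝓝 ((-2/5) * (zeta3 + 0))) := (hT.add my_ER_tendsto).const_mul _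
    rw [add_zero] at h3
    have h4 : (-2/5 : ℝ) * zeta3 = -(2/5)*zeta3 := by ring
    rw [h4] at h3
    exact Tendsto.congr (fun N => (key N).symm) h3
  have := tendsto_nhds_unique hap h2
  exact this
end

section
/- For every integer n ≥ 2 and complex c with |c| ≤ 4, the series ∑_{k=1}^∞ c^k/(k^n · binomial(2k,k)) equals the integral ∫₀¹ Li_{n−1}(c·x(1−x))/x dx, where Li_{n−1}(z) = ∑_{k≥1} z^k/k^{n−1}. -/
open scoped Nat
open MeasureTheory Set

/-- The complex polylogarithm `Li_s(z) = ∑_{k ≥ 1} z^k / k^s`. -/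
noncomputable def cLi (s : ℕ) (z : ℂ) : ℂ := ∑' k : ℕ, z ^ (k + 1) / (k + 1 : ℂ) ^ s

lemma sixteen_pow_le (k : ℕ) : 16 ^ (k+1) ≤ 4 * (k+1) * (Nat.centralBinom (k+1))^2 := by
  induction k with
  | zero => simp [Nat.centralBinom]
  | succ k ih =>
    have h : (k+2) * Nat.centralBinom (k+2) = 2 * (2*(k+1)+1) * Nat.centralBinom (k+1) :=
      Nat.succ_mul_centralBinom_succ (k+1)
    have h2 : ((k+2) * Nat.centralBinom (k+2))^2
        = (2 * (2*(k+1)+1) * Nat.centralBinom (k+1))^2 := by rw [h]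
    have key : (k+2)^2 * (4 * (k+2) * (Nat.centralBinom (k+2))^2)
        = 4 * (k+2) * (2*(2*(k+1)+1))^2 * (Nat.centralBinom (k+1))^2 := by
      calc (k+2)^2 * (4 * (k+2) * (Nat.centralBinom (k+2))^2)
          = 4 * (k+2) * ((k+2) * Nat.centralBinom (k+2))^2 := by ring
        _ = 4 * (k+2) * (2 * (2*(k+1)+1) * Nat.centralBinom (k+1))^2 := by rw [h2]
        _ = 4 * (k+2) * (2*(2*(k+1)+1))^2 * (Nat.centralBinom (k+1))^2 := by ring
    have lhs : (k+2)^2 * 16 ^ (k+2) ≤ (k+2)^2 * (4 * (k+2) * (Nat.centralBinom (k+2))^2) := by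
      rw [key]
      calc (k+2)^2 * 16 ^ (k+2) = 16 * (k+2)^2 * 16^(k+1) := by ring
        _ ≤ 16 * (k+2)^2 * (4 * (k+1) * (Nat.centralBinom (k+1))^2) :=
            Nat.mul_le_mul_left _ ih
        _ ≤ 4 * (k+2) * (2*(2*(k+1)+1))^2 * (Nat.centralBinom (k+1))^2 := by nlinarith
    exact Nat.le_of_mul_le_mul_left lhs (by positivity)

lemma fact_prod (a : ℕ) : ∀ m : ℕ, (a ! * ∏ j ∈ Finset.range m, (a+1+j)) = (a+m)! := by
  intro m
  induction m with
  | zero => simp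
  | succ m ih =>
    rw [Finset.prod_range_succ, ← mul_assoc, ih]
    rw [show a + (m+1) = (a+m) + 1 by ring, Nat.factorial_succ]
    ring

lemma betaC (k : ℕ) : ∫ x in (0:ℝ)..1, (x:ℂ)^k * (1-(x:ℂ))^(k+1)
    = (Nat.factorial k * Nat.factorial (k+1) : ℂ) / (Nat.factorial (2*k+2) : ℂ) := by
  have h := Complex.betaIntegral_eval_nat_add_one_right
    (u := (k+1 : ℂ)) (by simp; positivity) (k+1)
  rw [Complex.betaIntegral] at h
  have e1 : ∀ x : ℝ, (x:ℂ) ^ ((k+1 : ℂ) - 1) * (1 - (x:ℂ)) ^ (((k+1 : ℕ):ℂ) + 1 - 1)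
      = (x:ℂ)^k * (1-(x:ℂ))^(k+1) := by
    intro x
    have h1 : (k+1 : ℂ) - 1 = ((k : ℕ) : ℂ) := by push_cast; ring
    have h2 : (((k+1) : ℕ):ℂ) + 1 - 1 = (((k+1) : ℕ) : ℂ) := by ring
    rw [h1, h2, Complex.cpow_natCast, Complex.cpow_natCast]
  simp only [e1] at h
  rw [h]
  have hp : (∏ j ∈ Finset.range (k+1+1), ((k+1:ℂ) + j))
      = ((∏ j ∈ Finset.range (k+2), (k+1+j) : ℕ) : ℂ) := by push_cast; ring
  have hn : (k ! * ∏ j ∈ Finset.range (k+2), (k+1+j)) = (2*k+2)! := by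
    have := fact_prod k (k+2); rw [this]; congr 1; ring
  have hpne : ((∏ j ∈ Finset.range (k+2), (k+1+j) : ℕ) : ℂ) ≠ 0 := by
    have : 0 < ∏ j ∈ Finset.range (k+2), (k+1+j) := Finset.prod_pos (fun i _ => by omega)
    exact_mod_cast this.ne'
  have hfne : ((2*k+2)! : ℂ) ≠ 0 := by exact_mod_cast (Nat.factorial_pos _).ne'
  push_cast
  field_simp
  rw [hp, div_eq_iff hpne]
  norm_cast
  rw [← hn]; ring

lemma betaR (k : ℕ) : ∫ x in (0:ℝ)..1, x^k * (1-x)^(k+1)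
    = (Nat.factorial k * Nat.factorial (k+1) : ℝ) / (Nat.factorial (2*k+2) : ℝ) := by
  have := betaC k
  have h2 : ∫ x in (0:ℝ)..1, (((x^k * (1-x)^(k+1) : ℝ)) : ℂ)
      = (((∫ x in (0:ℝ)..1, x^k * (1-x)^(k+1)) : ℝ) : ℂ) := intervalIntegral.integral_ofReal
  simp only [Complex.ofReal_mul, Complex.ofReal_pow, Complex.ofReal_sub, Complex.ofReal_one] at h2
  rw [this] at h2
  apply Complex.ofReal_inj.mp
  rw [← h2]; push_cast; ring

-- key real bound: 4^(k+1) ≤ 2 √(k+1) CB(k+1)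
lemma four_pow_le (k : ℕ) :
    (4:ℝ)^(k+1) ≤ 2 * Real.sqrt (k+1) * (Nat.centralBinom (k+1) : ℝ) := by
  have h16 : ((4:ℝ)^(k+1))^2 ≤ (2 * Real.sqrt (k+1) * (Nat.centralBinom (k+1) : ℝ))^2 := by
    have e : (2 * Real.sqrt (k+1) * (Nat.centralBinom (k+1) : ℝ))^2
        = 4 * ((k:ℝ)+1) * (Nat.centralBinom (k+1) : ℝ)^2 := by
      rw [mul_pow, mul_pow, Real.sq_sqrt (by positivity)]; ring
    rw [e]
    have : ((4:ℝ)^(k+1))^2 = 16^(k+1) := by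
      rw [← pow_mul, mul_comm, pow_mul]; norm_num
    rw [this]
    exact_mod_cast sixteen_pow_le k
  exact (pow_le_pow_iff_left₀ (by positivity) (by positivity) (two_ne_zero)).mp h16

theorem stmt_19 (n : ℕ) (hn : 2 ≤ n) (c : ℂ) (hc : ‖c‖ ≤ 4) :
    ∑' k : ℕ, c ^ (k + 1)
        / ((k + 1 : ℂ) ^ n * (Nat.choose (2 * (k + 1)) (k + 1) : ℂ))
      = ∫ x in (0:ℝ)..1, cLi (n - 1) (c * x * (1 - x)) / (x : ℂ) := by
  set m := n - 1 with hm
  have hmn : m + 1 = n := by omega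
  have hm1 : 1 ≤ m := by omega
  set f : ℕ → ℝ → ℂ :=
    fun k x => (c^(k+1) / ((k:ℂ)+1)^m) * ((x:ℂ)^k * (1-(x:ℂ))^(k+1)) with hf
  have hK : ∀ k : ℕ, ((k:ℂ)+1) ≠ 0 := fun k => Nat.cast_add_one_ne_zero k
  -- nat factorial identity
  have hchoose : ∀ k : ℕ, ((2*(k+1)).choose (k+1)) * ((k+1)! * (k+1)!) = (2*k+2)! := by
    intro k
    have h := Nat.choose_mul_factorial_mul_factorial (show k+1 ≤ 2*(k+1) by omega)
    rw [show 2*(k+1) - (k+1) = k+1 by omega] at h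
    rw [show 2*k+2 = 2*(k+1) by ring, ← h]; ring
  -- termwise integral
  have hint : ∀ k : ℕ, (∫ x in (0:ℝ)..1, f k x)
      = c^(k+1) / (((k:ℂ)+1)^n * (((2*(k+1)).choose (k+1) : ℕ) : ℂ)) := by
    intro k
    simp only [hf]
    rw [intervalIntegral.integral_const_mul, betaC k]
    have hKn : ((k:ℂ)+1)^n = ((k:ℂ)+1)^m * ((k:ℂ)+1) := by rw [← hmn, pow_succ]
    have hfne : ((2*k+2)! : ℂ) ≠ 0 := by exact_mod_cast (Nat.factorial_pos _).ne'
    have hf1 : ((k)! : ℂ) ≠ 0 := by exact_mod_cast (Nat.factorial_pos _).ne'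
    have hf2 : (((k+1))! : ℂ) ≠ 0 := by exact_mod_cast (Nat.factorial_pos _).ne'
    have hcne : (((2*(k+1)).choose (k+1) : ℕ) : ℂ) ≠ 0 := by
      exact_mod_cast (Nat.choose_pos (show k+1 ≤ 2*(k+1) by omega)).ne'
    have hcast : (((k:ℂ))+1) * (((2*(k+1)).choose (k+1) : ℕ) : ℂ) * ((k)! : ℂ) * (((k+1))! : ℂ)
        = ((2*k+2)! : ℂ) := by
      have h2 : ((k+1) * ((2*(k+1)).choose (k+1)) * (k)! * ((k+1))!) = (2*k+2)! := by
        rw [← hchoose k]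
        rw [show (k+1) * ((2*(k+1)).choose (k+1)) * (k)! * ((k+1))!
            = ((2*(k+1)).choose (k+1)) * (((k+1) * (k)!) * ((k+1))!) by ring,
          ← Nat.factorial_succ]
      exact_mod_cast h2
    rw [hKn]
    have hd1 : ((k:ℂ)+1)^m * ((2*k+2)! : ℂ) ≠ 0 := mul_ne_zero (pow_ne_zero _ (hK k)) hfne
    have hd2 : (((k:ℂ)+1)^m * ((k:ℂ)+1)) * (((2*(k+1)).choose (k+1) : ℕ) : ℂ) ≠ 0 :=
      mul_ne_zero (mul_ne_zero (pow_ne_zero _ (hK k)) (hK k)) hcne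
    rw [div_mul_div_comm, div_eq_div_iff hd1 hd2]
    linear_combination (c^(k+1) * ((k:ℂ)+1)^m) * hcast
  -- pointwise identity on Ioc
  have hpt : EqOn (fun x : ℝ => cLi m (c * x * (1-x)) / (x:ℂ))
      (fun x : ℝ => ∑' k, f k x) (Ioc (0:ℝ) 1) := by
    intro x hx
    have hx0 : (x:ℂ) ≠ 0 := by exact_mod_cast ne_of_gt hx.1
    simp only [cLi]
    rw [← tsum_div_const]
    refine tsum_congr (fun k => ?_)
    simp only [hf]
    have hKm : ((k:ℂ)+1)^m ≠ 0 := pow_ne_zero _ (hK k)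
    have e : ((k:ℕ):ℂ) + 1 = (k:ℂ)+1 := by push_cast; ring
    rw [e]
    have hz : (c*(x:ℂ)*(1-(x:ℂ)))^(k+1) = c^(k+1) * ((x:ℂ)^(k+1) * (1-(x:ℂ))^(k+1)) := by
      rw [mul_pow, mul_pow]; ring
    rw [hz]
    field_simp
    ring
  -- continuity
  have hcont : ∀ k, Continuous (f k) := fun k =>
    continuous_const.mul ((Complex.continuous_ofReal.pow k).mul
      ((continuous_const.sub Complex.continuous_ofReal).pow (k+1)))
  -- dominating sequence
  set g : ℕ → ℝ → ℝ := fun k x => (4:ℝ)^(k+1)/((k:ℝ)+1) * (x^k * (1-x)^(k+1)) with hg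
  have hgcont : ∀ k, Continuous (g k) := fun k =>
    continuous_const.mul ((continuous_pow k).mul
      ((continuous_const.sub continuous_id).pow (k+1)))
  have hgint : ∀ k, IntegrableOn (g k) (Ioc (0:ℝ) 1) volume := fun k =>
    (hgcont k).integrableOn_Ioc
  set br : ℕ → ℝ := fun k => (4:ℝ)^(k+1)/((k:ℝ)+1) * ((k)! * ((k+1))! / ((2*k+2)! : ℝ)) with hbr
  have hgval : ∀ k, ∫ x in Ioc (0:ℝ) 1, g k x = br k := by
    intro k
    rw [← intervalIntegral.integral_of_le zero_le_one]
    simp only [hg]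
    rw [intervalIntegral.integral_const_mul, betaR k]
  have hfg : ∀ k, ∀ x ∈ Ioc (0:ℝ) 1, ‖f k x‖ ≤ g k x := by
    intro k x hx
    have hx0 : 0 ≤ x := le_of_lt hx.1
    have hx1 : x ≤ 1 := hx.2
    have hnormK : ‖((k:ℂ)+1)‖ = (k:ℝ)+1 := by
      rw [show ((k:ℂ)+1) = (((k+1:ℕ)):ℂ) by push_cast; ring, Complex.norm_natCast]
      push_cast; ring
    have h1 : ‖f k x‖ = ‖c‖^(k+1)/((k:ℝ)+1)^m * (x^k * (1-x)^(k+1)) := by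
      simp only [hf]
      rw [norm_mul, norm_div, norm_pow, norm_pow, hnormK, norm_mul, norm_pow, norm_pow]
      rw [show (1:ℂ) - (x:ℂ) = (((1-x : ℝ)):ℂ) by push_cast; ring]
      rw [Complex.norm_real, Complex.norm_real]
      rw [Real.norm_eq_abs, Real.norm_eq_abs, abs_of_nonneg hx0, abs_of_nonneg (by linarith)]
    rw [h1]
    simp only [hg]
    have hb : (0:ℝ) ≤ x^k * (1-x)^(k+1) :=
      mul_nonneg (pow_nonneg hx0 _) (pow_nonneg (by linarith) _)
    have hKm : ((k:ℝ)+1) ≤ ((k:ℝ)+1)^m := le_self_pow₀ (by linarith [Nat.cast_nonneg (α := ℝ) k]) (by omega)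
    have hnum : ‖c‖^(k+1) ≤ (4:ℝ)^(k+1) :=
      pow_le_pow_left₀ (norm_nonneg c) hc _
    have : ‖c‖^(k+1)/((k:ℝ)+1)^m ≤ (4:ℝ)^(k+1)/((k:ℝ)+1) := by
      apply div_le_div₀ (by positivity) hnum (by positivity) hKm
    exact mul_le_mul_of_nonneg_right this hb
  -- summability of br
  have hbrpos : ∀ k, 0 ≤ br k := fun k => by simp only [hbr]; positivity
  have hbrle : ∀ k : ℕ, br k ≤ 2 * (1 / (((k+1:ℕ)):ℝ)^((3:ℝ)/2)) := by
    intro k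
    have hcb : (((k:ℝ)+1) * (Nat.centralBinom (k+1) : ℝ)) * ((k)! * ((k+1))!) = ((2*k+2)! : ℝ) := by
      have h2 : ((k+1) * Nat.centralBinom (k+1)) * ((k)! * ((k+1))!) = (2*k+2)! := by
        rw [Nat.centralBinom]
        have := hchoose k
        rw [← this, show (k+1) * ((2*(k+1)).choose (k+1)) * ((k)! * ((k+1))!)
            = ((2*(k+1)).choose (k+1)) * (((k+1) * (k)!) * ((k+1))!) by ring, ← Nat.factorial_succ]
      exact_mod_cast h2
    have hC0 : (0:ℝ) < (Nat.centralBinom (k+1) : ℝ) := by exact_mod_cast Nat.centralBinom_pos (k+1)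
    have hK0 : (0:ℝ) < (k:ℝ)+1 := by positivity
    have hfacteq : ((k)! * ((k+1))! / ((2*k+2)! : ℝ))
        = 1 / (((k:ℝ)+1) * (Nat.centralBinom (k+1) : ℝ)) := by
      rw [div_eq_div_iff (by positivity) (by positivity)]
      linear_combination hcb
    have hsq : Real.sqrt ((k:ℝ)+1) > 0 := Real.sqrt_pos.mpr hK0
    have hr32 : (((k+1:ℕ)):ℝ)^((3:ℝ)/2) = ((k:ℝ)+1) * Real.sqrt ((k:ℝ)+1) := by
      push_cast
      rw [show (3:ℝ)/2 = 1 + 1/2 by norm_num, Real.rpow_add hK0, Real.rpow_one,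
        ← Real.sqrt_eq_rpow]
    rw [hbr]
    simp only
    rw [hfacteq, hr32]
    have h4 : (4:ℝ)^(k+1) ≤ 2 * Real.sqrt ((k:ℝ)+1) * (Nat.centralBinom (k+1) : ℝ) := by
      have := four_pow_le k
      push_cast at this ⊢
      convert this using 3
    rw [div_mul_div_comm, mul_one, mul_one_div, div_le_div_iff₀ (by positivity) (by positivity)]
    calc (4:ℝ)^(k+1) * (((k:ℝ)+1) * Real.sqrt ((k:ℝ)+1))
        ≤ (2 * Real.sqrt ((k:ℝ)+1) * (Nat.centralBinom (k+1) : ℝ)) * (((k:ℝ)+1) * Real.sqrt ((k:ℝ)+1)) := by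
          apply mul_le_mul_of_nonneg_right h4 (by positivity)
      _ = 2 * (((k:ℝ)+1) * (Real.sqrt ((k:ℝ)+1) * Real.sqrt ((k:ℝ)+1)) * (Nat.centralBinom (k+1) : ℝ)) := by ring
      _ = 2 * (((k:ℝ)+1) * ((k:ℝ)+1) * (Nat.centralBinom (k+1) : ℝ)) := by
          rw [Real.mul_self_sqrt (le_of_lt hK0)]
      _ = 2 * (((k:ℝ)+1) * (((k:ℝ)+1) * (Nat.centralBinom (k+1):ℝ))) := by ring
  have hDsum : Summable (fun k : ℕ => 2 * (1 / (((k+1:ℕ)):ℝ)^((3:ℝ)/2))) := by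
    have h0 : Summable (fun n : ℕ => 1 / (n:ℝ)^((3:ℝ)/2)) :=
      Real.summable_one_div_nat_rpow.mpr (by norm_num)
    exact ((summable_nat_add_iff 1).mpr h0).mul_left 2
  have hbrsum : Summable br := hDsum.of_nonneg_of_le hbrpos hbrle
  -- lintegral bound
  have hlint : ∀ k, (∫⁻ x in Ioc (0:ℝ) 1, ‖f k x‖₊) ≤ ENNReal.ofReal (br k) := by
    intro k
    have step1 : (∫⁻ x in Ioc (0:ℝ) 1, (‖f k x‖₊ : ENNReal))
        ≤ ∫⁻ x in Ioc (0:ℝ) 1, ENNReal.ofReal (g k x) := by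
      refine lintegral_mono_ae ?_
      refine (ae_restrict_iff' measurableSet_Ioc).2 (ae_of_all _ fun x hx => ?_)
      rw [← enorm_eq_nnnorm, ← ofReal_norm]
      exact ENNReal.ofReal_le_ofReal (hfg k x hx)
    have step2 : (∫⁻ x in Ioc (0:ℝ) 1, ENNReal.ofReal (g k x)) = ENNReal.ofReal (br k) := by
      rw [← ofReal_integral_eq_lintegral_ofReal (hgint k)
        ((ae_restrict_iff' measurableSet_Ioc).2 (ae_of_all _ fun x hx => by
          have hx0 : 0 ≤ x := le_of_lt hx.1
          have hx1 : x ≤ 1 := hx.2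
          simp only [hg]
          exact mul_nonneg (by positivity)
            (mul_nonneg (pow_nonneg (le_of_lt hx.1) _) (pow_nonneg (by linarith [hx.2]) _))))]
      rw [hgval k]
    exact step1.trans (le_of_eq step2)
  have htop : (∑' k, ∫⁻ x in Ioc (0:ℝ) 1, ‖f k x‖₊) ≠ ⊤ := by
    apply ne_top_of_le_ne_top ?_ (ENNReal.tsum_le_tsum hlint)
    rw [← ENNReal.ofReal_tsum_of_nonneg hbrpos hbrsum]
    exact ENNReal.ofReal_ne_top
  -- assemble
  have h5 : (∫ x in (0:ℝ)..1, cLi m (c * x * (1-x)) / (x:ℂ))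
      = ∑' k, ∫ x in Ioc (0:ℝ) 1, f k x := by
    rw [intervalIntegral.integral_of_le zero_le_one]
    rw [setIntegral_congr_fun measurableSet_Ioc hpt]
    exact integral_tsum (fun k => (hcont k).aestronglyMeasurable) htop
  rw [h5]
  refine tsum_congr (fun k => ?_)
  rw [← intervalIntegral.integral_of_le zero_le_one, hint k]
end
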